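/- For every n ≥ 3 and every integer k ≥ 0 (with the convention D_{m,j}^* = 0 for j < 0): D_{n,k}^{≥2} = (2k+1)·D_{n-1,k}^{≥2} + 2(n-k-1)·D_{n-1,k-1}^{≥2} + D_{n-1,k}^1 + D_{n-1,k+1}^{0,1} + D_{n-1,k}^{0,≥2}. -/

import Mathlib

/-- A signed permutation of `{1,…,n}`, encoded as an (unsigned) permutation of
`Fin n` together with a choice of sign for each position.  The associated
word is `π_1 π_2 ⋯ π_n` where `π_j = ± σ(j)`. -/
abbrev SignedPerm (n : ℕ) := Equiv.Perm (Fin n) × (Fin n → Bool)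

namespace SignedPerm

/-- The letter `π_j` of the word of `p`, for `1 ≤ j ≤ n` (and `0` otherwise). -/
def word {n : ℕ} (p : SignedPerm n) (j : ℕ) : ℤ :=
  if h : 1 ≤ j ∧ j ≤ n then
    (if p.2 ⟨j - 1, by omega⟩ then -1 else 1) * ((p.1 ⟨j - 1, by omega⟩ : ℕ) + 1)
  else 0

/-- The letter `π_j`, with the type `D` convention `π_0 = -π_2`. -/
def entry {n : ℕ} (p : SignedPerm n) (j : ℕ) : ℤ :=
  if j = 0 then -(p.word 2) else p.word j

/-- The set of `D`-descents of `p`: those `i ∈ {0,…,n-1}` with `π_i > π_{i+1}`. -/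
def ddes {n : ℕ} (p : SignedPerm n) : Finset ℕ :=
  (Finset.range n).filter fun i => p.entry (i + 1) < p.entry i

/-- The number of `D`-descents of `p`. -/
def d {n : ℕ} (p : SignedPerm n) : ℕ := p.ddes.card

/-- Membership in the type `D` Coxeter group `D_n ⊆ B_n`:
the number of negative letters is even. -/
def inD {n : ℕ} (p : SignedPerm n) : Prop :=
  Even (Finset.univ.filter (fun i => p.2 i = true)).card

/-- Type '1': descent at position `1` but not at `0`. -/
def type1 {n : ℕ} (p : SignedPerm n) : Prop := 1 ∈ p.ddes ∧ 0 ∉ p.ddes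

/-- Type '0,1': descents at both positions `0` and `1`. -/
def type01 {n : ℕ} (p : SignedPerm n) : Prop := 0 ∈ p.ddes ∧ 1 ∈ p.ddes

/-- Type '≥2': no descent at positions `0` and `1`. -/
def typeGe2 {n : ℕ} (p : SignedPerm n) : Prop := 0 ∉ p.ddes ∧ 1 ∉ p.ddes

/-- Type '0,≥2': descent at position `0` but not at `1`. -/
def type0Ge2 {n : ℕ} (p : SignedPerm n) : Prop := 0 ∈ p.ddes ∧ 1 ∉ p.ddes

instance {n : ℕ} (p : SignedPerm n) : Decidable p.inD := by
  unfold SignedPerm.inD; infer_instance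
instance {n : ℕ} (p : SignedPerm n) : Decidable p.type1 := by
  unfold SignedPerm.type1; infer_instance
instance {n : ℕ} (p : SignedPerm n) : Decidable p.type01 := by
  unfold SignedPerm.type01; infer_instance
instance {n : ℕ} (p : SignedPerm n) : Decidable p.typeGe2 := by
  unfold SignedPerm.typeGe2; infer_instance
instance {n : ℕ} (p : SignedPerm n) : Decidable p.type0Ge2 := by
  unfold SignedPerm.type0Ge2; infer_instance

end SignedPerm

/-- The type `D` Eulerian number `D_{n,k}`: the number of elements of `D_n`
with exactly `k` `D`-descents (zero for `k < 0`). -/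
def eulerD (n : ℕ) (k : ℤ) : ℕ :=
  (Finset.univ.filter fun p : SignedPerm n => p.inD ∧ (p.d : ℤ) = k).card

/-- The sub-Eulerian number `D_{n,k}^1`. -/
def subEuler1 (n : ℕ) (k : ℤ) : ℕ :=
  (Finset.univ.filter fun p : SignedPerm n => p.inD ∧ p.type1 ∧ (p.d : ℤ) = k).card

/-- The sub-Eulerian number `D_{n,k}^{0,1}`. -/
def subEuler01 (n : ℕ) (k : ℤ) : ℕ :=
  (Finset.univ.filter fun p : SignedPerm n => p.inD ∧ p.type01 ∧ (p.d : ℤ) = k).card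

/-- The sub-Eulerian number `D_{n,k}^{≥2}`. -/
def subEulerGe2 (n : ℕ) (k : ℤ) : ℕ :=
  (Finset.univ.filter fun p : SignedPerm n => p.inD ∧ p.typeGe2 ∧ (p.d : ℤ) = k).card

/-- The sub-Eulerian number `D_{n,k}^{0,≥2}`. -/
def subEuler0Ge2 (n : ℕ) (k : ℤ) : ℕ :=
  (Finset.univ.filter fun p : SignedPerm n => p.inD ∧ p.type0Ge2 ∧ (p.d : ℤ) = k).card

/-- The type `D` Eulerian polynomial `D_n(t) = Σ_{π ∈ D_n} t^{d(π)}`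
(with `D_0(t) = D_1(t) = 1`). -/
noncomputable def polyD (n : ℕ) : Polynomial ℚ :=
  ∑ p ∈ Finset.univ.filter (fun p : SignedPerm n => p.inD), Polynomial.X ^ p.d

/-- The sub-Eulerian polynomial `D_n^1(t)`. -/
noncomputable def polyD1 (n : ℕ) : Polynomial ℚ :=
  ∑ p ∈ Finset.univ.filter (fun p : SignedPerm n => p.inD ∧ p.type1), Polynomial.X ^ p.d

/-- The sub-Eulerian polynomial `D_n^{0,1}(t)`. -/
noncomputable def polyD01 (n : ℕ) : Polynomial ℚ :=
  ∑ p ∈ Finset.univ.filter (fun p : SignedPerm n => p.inD ∧ p.type01), Polynomial.X ^ p.d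

/-- The sub-Eulerian polynomial `D_n^{≥2}(t)`. -/
noncomputable def polyDGe2 (n : ℕ) : Polynomial ℚ :=
  ∑ p ∈ Finset.univ.filter (fun p : SignedPerm n => p.inD ∧ p.typeGe2), Polynomial.X ^ p.d

/-- The sub-Eulerian polynomial `D_n^{0,≥2}(t)`. -/
noncomputable def polyD0Ge2 (n : ℕ) : Polynomial ℚ :=
  ∑ p ∈ Finset.univ.filter (fun p : SignedPerm n => p.inD ∧ p.type0Ge2), Polynomial.X ^ p.d

namespace DRec
open Finset

variable {m : ℕ}

/-- Flip the sign of the entry whose absolute value is `1`. -/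
def flip1 (σ : SignedPerm m) : SignedPerm m :=
  (σ.1, fun i => if (σ.1 i : ℕ) = 0 then !(σ.2 i) else σ.2 i)

/-- Plain insertion of `±(m+1)` at slot `j` (word position `j+1`). -/
def pins (σ : SignedPerm m) (j : Fin (m + 1)) (ε : Bool) : SignedPerm (m + 1) :=
  ((finSuccEquiv' j).trans ((Equiv.optionCongr σ.1).trans (finSuccEquiv' (Fin.last m)).symm),
   fun i => (finSuccEquiv' j i).elim ε σ.2)

/-- The insertion map: insert `+(m+1)` at slot `j`, or insert `-(m+1)` and flip
the sign of the `±1` entry. -/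
def ins (σ : SignedPerm m) (j : Fin (m + 1)) (ε : Bool) : SignedPerm (m + 1) :=
  pins (if ε then flip1 σ else σ) j ε

lemma word_def (p : SignedPerm m) (i : ℕ) (h1 : 1 ≤ i) (h2 : i ≤ m) :
    p.word i = (if p.2 ⟨i - 1, by omega⟩ then -1 else 1) * ((p.1 ⟨i - 1, by omega⟩ : ℕ) + 1) :=
  dif_pos ⟨h1, h2⟩

lemma word_natAbs (p : SignedPerm m) (i : ℕ) (h1 : 1 ≤ i) (h2 : i ≤ m) :
    (p.word i).natAbs = (p.1 ⟨i - 1, by omega⟩ : ℕ) + 1 := by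
  rw [word_def p i h1 h2]
  rcases p.2 ⟨i - 1, by omega⟩ with _ | _ <;> simp [Int.natAbs_mul] <;> omega

lemma word_natAbs_le (p : SignedPerm m) (i : ℕ) (h1 : 1 ≤ i) (h2 : i ≤ m) :
    1 ≤ (p.word i).natAbs ∧ (p.word i).natAbs ≤ m := by
  rw [word_natAbs p i h1 h2]
  have := (p.1 ⟨i - 1, by omega⟩).isLt
  omega

lemma word_natAbs_ne (p : SignedPerm m) (i i' : ℕ) (h1 : 1 ≤ i) (h2 : i ≤ m)
    (h1' : 1 ≤ i') (h2' : i' ≤ m) (hne : i ≠ i') :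
    (p.word i).natAbs ≠ (p.word i').natAbs := by
  rw [word_natAbs p i h1 h2, word_natAbs p i' h1' h2']
  intro h
  have h2 : p.1 ⟨i - 1, by omega⟩ = p.1 ⟨i' - 1, by omega⟩ := Fin.ext (by omega)
  have := p.1.injective h2
  rw [Fin.mk.injEq] at this
  omega

end DRec
namespace DRec
open Finset
variable {m : ℕ}

lemma pins_word_le (σ : SignedPerm m) (j : Fin (m + 1)) (ε : Bool) (i : ℕ)
    (h1 : 1 ≤ i) (h2 : i ≤ (j : ℕ)) : (pins σ j ε).word i = σ.word i := by
  have hj := j.isLt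
  rw [word_def _ i h1 (by omega), word_def _ i h1 (by omega)]
  set g : Fin m := ⟨i - 1, by omega⟩ with hg
  have hfe : (⟨i - 1, by omega⟩ : Fin (m + 1)) = Fin.castSucc g := by
    simp [Fin.ext_iff, hg]
  have hlt : Fin.castSucc g < j := by
    simp only [Fin.lt_def, Fin.coe_castSucc, hg]; omega
  have e1 : finSuccEquiv' j (Fin.castSucc g) = some g := finSuccEquiv'_below hlt
  have hperm : (pins σ j ε).1 ⟨i - 1, by omega⟩ = Fin.castSucc (σ.1 g) := by
    rw [hfe]
    show (finSuccEquiv' (Fin.last m)).symm (Option.map σ.1 (finSuccEquiv' j (Fin.castSucc g))) = _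
    rw [e1]
    exact finSuccEquiv'_symm_some_below (Fin.castSucc_lt_last _)
  have hsign : (pins σ j ε).2 ⟨i - 1, by omega⟩ = σ.2 g := by
    show ((finSuccEquiv' j) ⟨i - 1, by omega⟩).elim ε σ.2 = _
    rw [hfe, e1]; rfl
  rw [hperm, hsign]
  simp

lemma pins_word_self (σ : SignedPerm m) (j : Fin (m + 1)) (ε : Bool) :
    (pins σ j ε).word ((j : ℕ) + 1) = (if ε then -1 else 1) * ((m : ℤ) + 1) := by
  have hj := j.isLt
  rw [word_def _ _ (by omega) (by omega)]
  have hfe : (⟨(j : ℕ) + 1 - 1, by omega⟩ : Fin (m + 1)) = j := by simp [Fin.ext_iff]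
  have e1 : finSuccEquiv' j j = none := finSuccEquiv'_at j
  have hperm : (pins σ j ε).1 ⟨(j : ℕ) + 1 - 1, by omega⟩ = Fin.last m := by
    rw [hfe]
    show (finSuccEquiv' (Fin.last m)).symm (Option.map σ.1 (finSuccEquiv' j j)) = _
    rw [e1]
    exact finSuccEquiv'_symm_none _
  have hsign : (pins σ j ε).2 ⟨(j : ℕ) + 1 - 1, by omega⟩ = ε := by
    show ((finSuccEquiv' j) ⟨(j : ℕ) + 1 - 1, by omega⟩).elim ε σ.2 = _
    rw [hfe, e1]; rfl
  rw [hperm, hsign]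
  simp [Fin.val_last]

lemma pins_word_gt (σ : SignedPerm m) (j : Fin (m + 1)) (ε : Bool) (i : ℕ)
    (h1 : (j : ℕ) + 2 ≤ i) (h2 : i ≤ m + 1) :
    (pins σ j ε).word i = σ.word (i - 1) := by
  rw [word_def _ i (by omega) (by omega), word_def _ (i - 1) (by omega) (by omega)]
  set g : Fin m := ⟨i - 2, by omega⟩ with hg
  have hfe : (⟨i - 1, by omega⟩ : Fin (m + 1)) = Fin.succ g := by
    simp [Fin.ext_iff, hg]; omega
  have hle : j ≤ Fin.castSucc g := by
    simp only [Fin.le_def, Fin.coe_castSucc, hg]; omega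
  have e1 : finSuccEquiv' j (Fin.succ g) = some g := finSuccEquiv'_above hle
  have hperm : (pins σ j ε).1 ⟨i - 1, by omega⟩ = Fin.castSucc (σ.1 g) := by
    rw [hfe]
    show (finSuccEquiv' (Fin.last m)).symm (Option.map σ.1 (finSuccEquiv' j (Fin.succ g))) = _
    rw [e1]
    exact finSuccEquiv'_symm_some_below (Fin.castSucc_lt_last _)
  have hsign : (pins σ j ε).2 ⟨i - 1, by omega⟩ = σ.2 g := by
    show ((finSuccEquiv' j) ⟨i - 1, by omega⟩).elim ε σ.2 = _
    rw [hfe, e1]; rfl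
  rw [hperm, hsign]
  have : (⟨i - 1 - 1, by omega⟩ : Fin m) = g := by simp [Fin.ext_iff, hg]; omega
  rw [this]
  simp

end DRec
namespace DRec
open Finset
variable {m : ℕ}

lemma flip1_word (σ : SignedPerm m) (i : ℕ) :
    (flip1 σ).word i = σ.word i ∨
      ((σ.word i).natAbs = 1 ∧ (flip1 σ).word i = -σ.word i) := by
  by_cases h : 1 ≤ i ∧ i ≤ m
  · rw [word_def _ i h.1 h.2, word_def _ i h.1 h.2]
    have hfst : ((flip1 σ).1 ⟨i - 1, by omega⟩ : ℕ) = (σ.1 ⟨i - 1, by omega⟩ : ℕ) := rfl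
    have hsnd : (flip1 σ).2 ⟨i - 1, by omega⟩ =
        if ((σ.1 ⟨i - 1, by omega⟩ : Fin m) : ℕ) = 0 then !(σ.2 ⟨i - 1, by omega⟩)
        else σ.2 ⟨i - 1, by omega⟩ := rfl
    rw [hfst, hsnd]
    by_cases h0 : ((σ.1 ⟨i - 1, by omega⟩ : Fin m) : ℕ) = 0
    · right
      rw [if_pos h0, h0]
      constructor
      · rcases σ.2 ⟨i - 1, by omega⟩ with _ | _ <;> simp
      · rcases σ.2 ⟨i - 1, by omega⟩ with _ | _ <;> simp
    · left; rw [if_neg h0]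
  · left
    have : σ.word i = 0 := dif_neg h
    have h2 : (flip1 σ).word i = 0 := dif_neg h
    rw [this, h2]

lemma flip_cmp {a b a' b' : ℤ} (ha1 : 1 ≤ a.natAbs) (hb1 : 1 ≤ b.natAbs)
    (hab : a.natAbs ≠ b.natAbs)
    (ha : a' = a ∨ (a.natAbs = 1 ∧ a' = -a))
    (hb : b' = b ∨ (b.natAbs = 1 ∧ b' = -b)) :
    b' < a' ↔ b < a := by omega

lemma ddes_flip1 (hm : 2 ≤ m) (σ : SignedPerm m) : (flip1 σ).ddes = σ.ddes := by
  ext x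
  simp only [SignedPerm.ddes, mem_filter, mem_range, and_congr_right_iff]
  intro hx
  rcases Nat.eq_zero_or_pos x with rfl | hx1
  · show (flip1 σ).entry 1 < (flip1 σ).entry 0 ↔ σ.entry 1 < σ.entry 0
    rw [SignedPerm.entry, SignedPerm.entry, SignedPerm.entry, SignedPerm.entry]
    norm_num
    exact flip_cmp (a := -σ.word 2) (b := σ.word 1)
      (by rw [Int.natAbs_neg]; exact (word_natAbs_le σ 2 (by omega) (by omega)).1)
      ((word_natAbs_le σ 1 (by omega) (by omega)).1)
      (by rw [Int.natAbs_neg]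
          exact word_natAbs_ne σ 2 1 (by omega) (by omega) (by omega) (by omega) (by omega))
      (by rcases flip1_word σ 2 with h | ⟨h1, h2⟩
          · left; rw [h]
          · right; rw [Int.natAbs_neg]; exact ⟨h1, by rw [h2]⟩)
      (flip1_word σ 1)
  · show (flip1 σ).entry (x + 1) < (flip1 σ).entry x ↔ σ.entry (x + 1) < σ.entry x
    rw [SignedPerm.entry, SignedPerm.entry, SignedPerm.entry, SignedPerm.entry,
      if_neg (by omega), if_neg (by omega), if_neg (by omega), if_neg (by omega)]
    exact flip_cmp (a := σ.word x) (b := σ.word (x + 1))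
      ((word_natAbs_le σ x (by omega) (by omega)).1)
      ((word_natAbs_le σ (x + 1) (by omega) (by omega)).1)
      (word_natAbs_ne σ x (x + 1) (by omega) (by omega) (by omega) (by omega) (by omega))
      (flip1_word σ x) (flip1_word σ (x + 1))

end DRec
namespace DRec
open Finset
variable {m : ℕ}

lemma mem_ddes_iff (p : SignedPerm m) (x : ℕ) (hx : 1 ≤ x) :
    x ∈ p.ddes ↔ x < m ∧ p.word (x + 1) < p.word x := by
  unfold SignedPerm.ddes
  rw [Finset.mem_filter, Finset.mem_range]
  simp only [SignedPerm.entry,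
    if_neg (by omega : ¬ x + 1 = 0), if_neg (by omega : ¬ x = 0)]

lemma zero_mem_ddes_iff (p : SignedPerm m) :
    0 ∈ p.ddes ↔ 0 < m ∧ p.word 1 < -p.word 2 := by
  simp only [SignedPerm.ddes, mem_filter, mem_range, SignedPerm.entry,
    if_neg (by omega : ¬ (0 : ℕ) + 1 = 0), if_pos rfl]
  norm_num

lemma word_lt (p : SignedPerm m) (i : ℕ) (h1 : 1 ≤ i) (h2 : i ≤ m) :
    -((m : ℤ) + 1) < p.word i ∧ p.word i < (m : ℤ) + 1 := by
  have := word_natAbs_le p i h1 h2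
  omega

lemma pins_not_ge2_zero (hm : 1 ≤ m) (σ : SignedPerm m) (j : Fin (m + 1)) (ε : Bool)
    (hj : (j : ℕ) = 0) : ¬ (pins σ j ε).typeGe2 := by
  have w1 : (pins σ j ε).word 1 = (if ε then -1 else 1) * ((m : ℤ) + 1) := by
    have := pins_word_self σ j ε; rwa [hj] at this
  have w2 : (pins σ j ε).word 2 = σ.word 1 := by
    have := pins_word_gt σ j ε 2 (by omega) (by omega)
    simpa using this
  have hb := word_lt σ 1 le_rfl hm
  intro hge
  rcases hge with ⟨h0, h1⟩
  cases ε with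
  | true =>
    exact h0 ((zero_mem_ddes_iff _).2 ⟨by omega, by rw [w1, w2]; simp; omega⟩)
  | false =>
    exact h1 ((mem_ddes_iff _ 1 le_rfl).2 ⟨by omega, by rw [w1, w2]; simp; omega⟩)

lemma pins_not_ge2_one_true (hm : 1 ≤ m) (σ : SignedPerm m) (j : Fin (m + 1))
    (hj : (j : ℕ) = 1) : ¬ (pins σ j true).typeGe2 := by
  have w1 : (pins σ j true).word 1 = σ.word 1 := pins_word_le σ j true 1 le_rfl (by omega)
  have w2 : (pins σ j true).word 2 = (if true then -1 else 1) * ((m : ℤ) + 1) := by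
    have := pins_word_self σ j true; rwa [hj] at this
  have hb := word_lt σ 1 le_rfl hm
  intro hge
  exact hge.1 ((zero_mem_ddes_iff _).2 ⟨by omega, by rw [w1, w2]; simp; omega⟩)

end DRec
namespace DRec
open Finset
variable {m : ℕ}

lemma mem_ddes_lt {p : SignedPerm m} {i : ℕ} (h : i ∈ p.ddes) : i < m :=
  Finset.mem_range.1 (Finset.mem_filter.1 h).1

lemma pins_ddes_one (hm : 2 ≤ m) (σ : SignedPerm m) (j : Fin (m + 1)) (hj : (j : ℕ) = 1) :
    (pins σ j false).ddes = insert 2 ((σ.ddes.filter (fun i => 2 ≤ i)).image (· + 1)) := by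
  have w1 : (pins σ j false).word 1 = σ.word 1 := pins_word_le σ j false 1 le_rfl (by omega)
  have w2 : (pins σ j false).word 2 = (m : ℤ) + 1 := by
    have := pins_word_self σ j false; rw [hj] at this; simpa using this
  have wgt : ∀ i, 3 ≤ i → i ≤ m + 1 → (pins σ j false).word i = σ.word (i - 1) := by
    intro i h1 h2; exact pins_word_gt σ j false i (by omega) h2
  ext x
  simp only [mem_insert, mem_image, mem_filter]
  rcases Nat.lt_or_ge x 3 with hx3 | hx3
  · interval_cases x
    · rw [zero_mem_ddes_iff, w1, w2]
      have hb := word_lt σ 1 le_rfl (by omega)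
      constructor
      · omega
      · rintro (h | ⟨i, ⟨_, _⟩, _⟩) <;> omega
    · rw [mem_ddes_iff _ 1 le_rfl, w1, w2]
      have hb := word_lt σ 1 le_rfl (by omega)
      constructor
      · omega
      · rintro (h | ⟨i, ⟨_, _⟩, _⟩) <;> omega
    · rw [mem_ddes_iff _ 2 (by omega), w2, wgt 3 le_rfl (by omega)]
      have hb := word_lt σ 2 (by omega) (by omega)
      constructor
      · intro; left; rfl
      · intro; refine ⟨by omega, by simpa using hb.2⟩
  · rcases Nat.lt_or_ge x (m + 1) with hxm | hxm
    · rw [mem_ddes_iff _ x (by omega), wgt x hx3 (by omega), wgt (x + 1) (by omega) (by omega)]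
      have hmem := mem_ddes_iff σ (x - 1) (by omega)
      rw [(by omega : x - 1 + 1 = x)] at hmem
      have : x + 1 - 1 = x := by omega
      rw [this]
      constructor
      · intro h
        right
        exact ⟨x - 1, ⟨hmem.2 ⟨by omega, h.2⟩, by omega⟩, by omega⟩
      · rintro (h | ⟨i, ⟨hi, hi2⟩, hi3⟩)
        · omega
        · have : i = x - 1 := by omega
          subst this
          exact ⟨by omega, (hmem.1 hi).2⟩
    · constructor
      · intro h
        exact absurd (mem_ddes_lt h) (by omega)
      · rintro (h | ⟨i, ⟨hi, _⟩, hi3⟩)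
        · omega
        · have := mem_ddes_lt hi; omega

lemma pins_mem_ddes_ge (hm : 2 ≤ m) (σ : SignedPerm m) (j : Fin (m + 1)) (ε : Bool)
    (hj : 2 ≤ (j : ℕ)) (x : ℕ) :
    x ∈ (pins σ j ε).ddes ↔
      (x ∈ σ.ddes ∧ x < (j : ℕ)) ∨ (ε = true ∧ x = (j : ℕ)) ∨
      (ε = false ∧ (j : ℕ) < m ∧ x = (j : ℕ) + 1) ∨
      ((j : ℕ) + 1 ≤ x - 1 ∧ x - 1 ∈ σ.ddes) := by
  have hjm : (j : ℕ) ≤ m := by omega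
  have wle : ∀ i, 1 ≤ i → i ≤ (j : ℕ) → (pins σ j ε).word i = σ.word i :=
    fun i h1 h2 => pins_word_le σ j ε i h1 h2
  have wself := pins_word_self σ j ε
  have wgt : ∀ i, (j : ℕ) + 2 ≤ i → i ≤ m + 1 → (pins σ j ε).word i = σ.word (i - 1) :=
    fun i h1 h2 => pins_word_gt σ j ε i h1 h2
  rcases Nat.eq_zero_or_pos x with rfl | hx1
  · rw [zero_mem_ddes_iff, zero_mem_ddes_iff] at *
    rw [wle 1 le_rfl (by omega), wle 2 (by omega) hj]
    constructor
    · intro h; exact Or.inl ⟨⟨by omega, h.2⟩, by omega⟩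
    · rintro (⟨⟨h1, h2⟩, _⟩ | ⟨_, h⟩ | ⟨_, _, h⟩ | ⟨h, _⟩) <;> first | exact ⟨by omega, h2⟩ | omega
  · rcases Nat.lt_or_ge x (j : ℕ) with hxj | hxj
    · -- 1 ≤ x ≤ j - 1
      rw [mem_ddes_iff _ x hx1, wle x hx1 (by omega), wle (x + 1) (by omega) (by omega),
        mem_ddes_iff σ x hx1]
      constructor
      · intro h; exact Or.inl ⟨⟨by omega, h.2⟩, by omega⟩
      · rintro (⟨⟨h1, h2⟩, _⟩ | ⟨_, h⟩ | ⟨_, _, h⟩ | ⟨h, h'⟩)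
        · exact ⟨by omega, h2⟩
        · omega
        · omega
        · have := mem_ddes_lt h'; omega
    · rcases Nat.eq_or_lt_of_le hxj with hxj' | hxj'
      · -- x = j
        rw [mem_ddes_iff _ x hx1, ← hxj', wle (j : ℕ) (by omega) le_rfl, wself]
        have hb := word_lt σ (j : ℕ) (by omega) (by omega)
        constructor
        · intro ⟨_, h⟩
          cases ε with
          | true => exact Or.inr (Or.inl ⟨rfl, by omega⟩)
          | false => simp at h; omega
        · rintro (⟨h, h'⟩ | ⟨hε, _⟩ | ⟨_, _, h⟩ | ⟨h, h'⟩)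
          · omega
          · subst hε; exact ⟨by omega, by simp; omega⟩
          · omega
          · have := mem_ddes_lt h'; omega
      · rcases Nat.eq_or_lt_of_le (by omega : (j : ℕ) + 1 ≤ x) with hxj1 | hxj1
        · -- x = j + 1
          rcases Nat.lt_or_ge (j : ℕ) m with hjm' | hjm'
          · rw [mem_ddes_iff _ x hx1, ← hxj1, wself,
              wgt ((j : ℕ) + 2) le_rfl (by omega)]
            have hb := word_lt σ ((j : ℕ) + 1) (by omega) (by omega)
            have : (j : ℕ) + 2 - 1 = (j : ℕ) + 1 := by omega
            rw [this]
            constructor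
            · intro ⟨_, h⟩
              cases ε with
              | true => simp at h; omega
              | false => exact Or.inr (Or.inr (Or.inl ⟨rfl, hjm', by omega⟩))
            · rintro (⟨h, h'⟩ | ⟨_, h⟩ | ⟨hε, _, _⟩ | ⟨h, h'⟩)
              · omega
              · omega
              · subst hε; exact ⟨by omega, by simp; omega⟩
              · omega
          · -- j = m, x = m + 1 : both sides false
            have hjm'' : (j : ℕ) = m := by omega
            constructor
            · intro h; have := mem_ddes_lt h; omega
            · rintro (⟨h, h'⟩ | ⟨_, h⟩ | ⟨_, h, _⟩ | ⟨h, h'⟩)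
              · omega
              · omega
              · omega
              · have := mem_ddes_lt h'; omega
        · -- j + 2 ≤ x
          rcases Nat.lt_or_ge x (m + 1) with hxm | hxm
          · rw [mem_ddes_iff _ x hx1, wgt x (by omega) (by omega),
              wgt (x + 1) (by omega) (by omega)]
            have hmem := mem_ddes_iff σ (x - 1) (by omega)
            rw [(by omega : x - 1 + 1 = x)] at hmem
            have : x + 1 - 1 = x := by omega
            rw [this]
            constructor
            · intro ⟨_, h⟩
              exact Or.inr (Or.inr (Or.inr ⟨by omega, hmem.2 ⟨by omega, h⟩⟩))
            · rintro (⟨h, h'⟩ | ⟨_, h⟩ | ⟨_, _, h⟩ | ⟨h, h'⟩)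
              · omega
              · omega
              · omega
              · exact ⟨by omega, (hmem.1 h').2⟩
          · constructor
            · intro h; have := mem_ddes_lt h; omega
            · rintro (⟨h, h'⟩ | ⟨_, h⟩ | ⟨_, h, _⟩ | ⟨h, h'⟩)
              · omega
              · omega
              · omega
              · have := mem_ddes_lt h'; omega

end DRec
namespace DRec
open Finset
variable {m : ℕ}

lemma flip1_flip1 (σ : SignedPerm m) : flip1 (flip1 σ) = σ := by
  refine Prod.ext rfl (funext fun i => ?_)
  show (if ((σ.1 i : ℕ)) = 0 then !(if ((σ.1 i : ℕ)) = 0 then !(σ.2 i) else σ.2 i)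
      else (if ((σ.1 i : ℕ)) = 0 then !(σ.2 i) else σ.2 i)) = σ.2 i
  by_cases h : ((σ.1 i : ℕ)) = 0 <;> simp [h]

lemma ins_base_ddes (hm : 2 ≤ m) (σ : SignedPerm m) (ε : Bool) :
    (if ε then flip1 σ else σ).ddes = σ.ddes := by
  cases ε
  · rfl
  · exact ddes_flip1 hm σ

lemma ins_not_ge2_zero (hm : 1 ≤ m) (σ : SignedPerm m) (j : Fin (m + 1)) (ε : Bool)
    (hj : (j : ℕ) = 0) : ¬ (ins σ j ε).typeGe2 :=
  pins_not_ge2_zero hm _ j ε hj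

lemma ins_not_ge2_one_true (hm : 1 ≤ m) (σ : SignedPerm m) (j : Fin (m + 1))
    (hj : (j : ℕ) = 1) : ¬ (ins σ j true).typeGe2 :=
  pins_not_ge2_one_true hm _ j hj

lemma ins_ddes_one (hm : 2 ≤ m) (σ : SignedPerm m) (j : Fin (m + 1)) (hj : (j : ℕ) = 1) :
    (ins σ j false).ddes = insert 2 ((σ.ddes.filter (fun i => 2 ≤ i)).image (· + 1)) :=
  pins_ddes_one hm σ j hj

lemma ins_mem_ddes_ge (hm : 2 ≤ m) (σ : SignedPerm m) (j : Fin (m + 1)) (ε : Bool)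
    (hj : 2 ≤ (j : ℕ)) (x : ℕ) :
    x ∈ (ins σ j ε).ddes ↔
      (x ∈ σ.ddes ∧ x < (j : ℕ)) ∨ (ε = true ∧ x = (j : ℕ)) ∨
      (ε = false ∧ (j : ℕ) < m ∧ x = (j : ℕ) + 1) ∨
      ((j : ℕ) + 1 ≤ x - 1 ∧ x - 1 ∈ σ.ddes) := by
  rw [show (ins σ j ε) = pins (if ε then flip1 σ else σ) j ε from rfl,
    pins_mem_ddes_ge hm _ j ε hj x, ins_base_ddes hm σ ε]

lemma ins_ge2_ge (hm : 2 ≤ m) (σ : SignedPerm m) (j : Fin (m + 1)) (ε : Bool)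
    (hj : 2 ≤ (j : ℕ)) : (ins σ j ε).typeGe2 ↔ σ.typeGe2 := by
  unfold SignedPerm.typeGe2
  rw [ins_mem_ddes_ge hm σ j ε hj 0, ins_mem_ddes_ge hm σ j ε hj 1]
  constructor
  · intro ⟨h0, h1⟩
    exact ⟨fun h => h0 (Or.inl ⟨h, by omega⟩), fun h => h1 (Or.inl ⟨h, by omega⟩)⟩
  · intro ⟨h0, h1⟩
    constructor
    · rintro (⟨h, _⟩ | ⟨_, h⟩ | ⟨_, _, h⟩ | ⟨h, h'⟩) <;> first | exact h0 h | omega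
    · rintro (⟨h, _⟩ | ⟨_, h⟩ | ⟨_, _, h⟩ | ⟨h, h'⟩) <;> first | exact h1 h | omega

lemma ins_ddes_ge_eq (hm : 2 ≤ m) (σ : SignedPerm m) (j : Fin (m + 1)) (ε : Bool)
    (hj : 2 ≤ (j : ℕ)) :
    (ins σ j ε).ddes =
      (σ.ddes.filter (fun i => i < (j : ℕ))) ∪
      ((if ε then {(j : ℕ)} else if (j : ℕ) < m then {(j : ℕ) + 1} else ∅) ∪
       ((σ.ddes.filter (fun i => (j : ℕ) < i)).image (· + 1))) := by
  ext x
  rw [ins_mem_ddes_ge hm σ j ε hj x]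
  simp only [mem_union, mem_filter, mem_image, mem_singleton]
  constructor
  · rintro (⟨h, h'⟩ | ⟨hε, h⟩ | ⟨hε, h1, h2⟩ | ⟨h, h'⟩)
    · exact Or.inl ⟨h, h'⟩
    · subst hε; exact Or.inr (Or.inl (by simp [h]))
    · subst hε; exact Or.inr (Or.inl (by simp [if_pos h1, h2]))
    · refine Or.inr (Or.inr ⟨x - 1, ⟨h', by omega⟩, by omega⟩)
  · rintro (⟨h, h'⟩ | h | ⟨a, ⟨ha, ha'⟩, ha''⟩)
    · exact Or.inl ⟨h, h'⟩
    · cases ε with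
      | true => simp at h; exact Or.inr (Or.inl ⟨rfl, h⟩)
      | false =>
        simp only [Bool.false_eq_true, if_false] at h
        by_cases hjm : (j : ℕ) < m
        · rw [if_pos hjm] at h; simp at h
          exact Or.inr (Or.inr (Or.inl ⟨rfl, hjm, h⟩))
        · rw [if_neg hjm] at h; simp at h
    · refine Or.inr (Or.inr (Or.inr ⟨by omega, ?_⟩))
      have : x - 1 = a := by omega
      rwa [this]

lemma filter_tri (D : Finset ℕ) (j : ℕ) :
    (D.filter (fun i => i < j)).card + (if j ∈ D then 1 else 0)
      + (D.filter (fun i => j < i)).card = D.card := by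
  classical
  have hsplit : D.filter (fun i => ¬ i < j) =
      (D.filter (fun i => i = j)) ∪ (D.filter (fun i => j < i)) := by
    ext i
    simp only [mem_filter, mem_union]
    constructor
    · rintro ⟨h1, h2⟩
      rcases Nat.eq_or_lt_of_le (by omega : j ≤ i) with h | h
      · exact Or.inl ⟨h1, h.symm⟩
      · exact Or.inr ⟨h1, h⟩
    · rintro (⟨h1, h2⟩ | ⟨h1, h2⟩) <;> exact ⟨h1, by omega⟩
  have hdisj : Disjoint (D.filter (fun i => i = j)) (D.filter (fun i => j < i)) := by
    rw [Finset.disjoint_left]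
    intro x hx hx'
    rw [mem_filter] at hx hx'
    omega
  have h1 := Finset.card_filter_add_card_filter_not (s := D) (p := fun i => i < j)
  rw [hsplit, Finset.card_union_of_disjoint hdisj, Finset.filter_eq'] at h1
  split_ifs at h1 ⊢ <;> simp at h1 <;> omega

lemma ins_d_ge (hm : 2 ≤ m) (σ : SignedPerm m) (j : Fin (m + 1)) (ε : Bool)
    (hj : 2 ≤ (j : ℕ)) :
    (ins σ j ε).d + (if (j : ℕ) ∈ σ.ddes then 1 else 0) =
      σ.d + (if ε then 1 else if (j : ℕ) < m then 1 else 0) := by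
  have hB : ∀ x ∈ (if ε then ({(j : ℕ)} : Finset ℕ) else if (j : ℕ) < m then {(j : ℕ) + 1} else ∅),
      x = (j : ℕ) ∨ x = (j : ℕ) + 1 := by
    intro x hx
    cases ε with
    | true => simp at hx; omega
    | false =>
      simp only [Bool.false_eq_true, if_false] at hx
      split_ifs at hx <;> simp at hx <;> omega
  have hC : ∀ x ∈ (σ.ddes.filter (fun i => (j : ℕ) < i)).image (· + 1), (j : ℕ) + 2 ≤ x := by
    intro x hx
    simp only [mem_image, mem_filter] at hx
    obtain ⟨a, ⟨_, ha⟩, ha'⟩ := hx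
    omega
  have hd1 : Disjoint (σ.ddes.filter (fun i => i < (j : ℕ)))
      ((if ε then ({(j : ℕ)} : Finset ℕ) else if (j : ℕ) < m then {(j : ℕ) + 1} else ∅) ∪
       ((σ.ddes.filter (fun i => (j : ℕ) < i)).image (· + 1))) := by
    rw [Finset.disjoint_left]
    intro x hx hx'
    have h1 : x < (j : ℕ) := (mem_filter.1 hx).2
    rcases mem_union.1 hx' with h | h
    · have := hB x h; omega
    · have := hC x h; omega
  have hd2 : Disjoint (if ε then ({(j : ℕ)} : Finset ℕ) else if (j : ℕ) < m then {(j : ℕ) + 1} else ∅)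
      ((σ.ddes.filter (fun i => (j : ℕ) < i)).image (· + 1)) := by
    rw [Finset.disjoint_left]
    intro x hx hx'
    have := hB x hx
    have := hC x hx'
    omega
  have hcard : (ins σ j ε).d = (σ.ddes.filter (fun i => i < (j : ℕ))).card
      + ((if ε then 1 else if (j : ℕ) < m then 1 else 0)
        + (σ.ddes.filter (fun i => (j : ℕ) < i)).card) := by
    rw [SignedPerm.d, ins_ddes_ge_eq hm σ j ε hj, Finset.card_union_of_disjoint hd1,
      Finset.card_union_of_disjoint hd2,
      Finset.card_image_of_injective _ (add_left_injective 1)]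
    congr 2
    cases ε with
    | true => simp
    | false =>
      simp only [Bool.false_eq_true, if_false]
      split_ifs <;> simp
  have := filter_tri σ.ddes (j : ℕ)
  have hd : σ.d = σ.ddes.card := rfl
  omega

lemma ins_ge2_one (hm : 2 ≤ m) (σ : SignedPerm m) (j : Fin (m + 1)) (hj : (j : ℕ) = 1) :
    (ins σ j false).typeGe2 := by
  unfold SignedPerm.typeGe2
  rw [ins_ddes_one hm σ j hj]
  simp only [mem_insert, mem_image, mem_filter]
  constructor
  · rintro (h | ⟨a, _, _⟩) <;> omega
  · rintro (h | ⟨a, ⟨_, _⟩, _⟩) <;> omega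

lemma ins_d_one (hm : 2 ≤ m) (σ : SignedPerm m) (j : Fin (m + 1)) (hj : (j : ℕ) = 1) :
    (ins σ j false).d = 1 + (σ.ddes.filter (fun i => 2 ≤ i)).card := by
  have hnm : 2 ∉ (σ.ddes.filter (fun i => 2 ≤ i)).image (· + 1) := by
    intro h
    simp only [mem_image, mem_filter] at h
    obtain ⟨a, ⟨_, ha⟩, ha'⟩ := h
    omega
  rw [SignedPerm.d, ins_ddes_one hm σ j hj, Finset.card_insert_of_notMem hnm,
    Finset.card_image_of_injective _ (add_left_injective 1)]
  omega

end DRec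
namespace DRec
open Finset
variable {m : ℕ}

lemma pins_snd_elim (σ' : SignedPerm m) (j : Fin (m + 1)) (ε : Bool) (i : Fin (m + 1)) :
    (pins σ' j ε).2 i = (finSuccEquiv' j i).elim ε σ'.2 := rfl

lemma card_signs (σ' : SignedPerm m) (j : Fin (m + 1)) (ε : Bool) :
    (univ.filter fun i => (pins σ' j ε).2 i = true).card
      = (if ε then 1 else 0) + (univ.filter fun i => σ'.2 i = true).card := by
  rw [Finset.card_filter, Finset.card_filter,
    ← Equiv.sum_comp (finSuccEquiv' j).symm
      (fun i => if (pins σ' j ε).2 i = true then 1 else 0)]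
  have h1 : ∀ o : Option (Fin m),
      (pins σ' j ε).2 ((finSuccEquiv' j).symm o) = o.elim ε σ'.2 := by
    intro o
    rw [pins_snd_elim, Equiv.apply_symm_apply]
  simp only [Function.comp, h1]
  rw [Fintype.sum_option]
  cases ε <;> simp <;> rw [Finset.card_filter] <;> convert rfl <;> split_ifs <;> simp_all

lemma card_flip1 (hm : 1 ≤ m) (σ : SignedPerm m) :
    Even ((univ.filter fun i => (flip1 σ).2 i = true).card) ↔
      ¬ Even ((univ.filter fun i => σ.2 i = true).card) := by
  set a : Fin m := σ.1.symm ⟨0, by omega⟩ with ha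
  have hav : ((σ.1 a : Fin m) : ℕ) = 0 := by
    rw [ha, Equiv.apply_symm_apply]
  rw [Finset.card_filter, Finset.card_filter,
    ← Finset.sum_erase_add _ _ (mem_univ a), ← Finset.sum_erase_add _ _ (mem_univ a)]
  have hcong : ∀ i ∈ univ.erase a,
      (if (flip1 σ).2 i = true then 1 else 0) = (if σ.2 i = true then 1 else 0) := by
    intro i hi
    have hne : i ≠ a := (Finset.mem_erase.1 hi).1
    have : ((σ.1 i : Fin m) : ℕ) ≠ 0 := by
      intro h0
      apply hne
      have : σ.1 i = ⟨0, by omega⟩ := Fin.ext h0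
      rw [ha, ← this, Equiv.symm_apply_apply]
    show (if (if ((σ.1 i : Fin m) : ℕ) = 0 then !(σ.2 i) else σ.2 i) = true then 1 else 0) = _
    rw [if_neg this]
  rw [Finset.sum_congr rfl hcong]
  have hflip : (flip1 σ).2 a = !(σ.2 a) := by
    show (if ((σ.1 a : Fin m) : ℕ) = 0 then !(σ.2 a) else σ.2 a) = _
    rw [if_pos hav]
  rw [hflip]
  rcases σ.2 a with _ | _ <;> simp [Nat.even_iff, Nat.odd_iff] <;> omega

lemma inD_ins (hm : 1 ≤ m) (σ : SignedPerm m) (j : Fin (m + 1)) (ε : Bool) :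
    (ins σ j ε).inD ↔ σ.inD := by
  unfold SignedPerm.inD
  rw [show ins σ j ε = pins (if ε then flip1 σ else σ) j ε from rfl, card_signs]
  cases ε with
  | false => simp
  | true =>
    have e1 : (if (true : Bool) then (1 : ℕ) else 0) = 1 := rfl
    have e2 : (if (true : Bool) then flip1 σ else σ) = flip1 σ := rfl
    rw [e1, e2]
    have h := card_flip1 hm σ
    simp only [Nat.even_iff] at h ⊢
    omega

lemma pins_fst_at (σ' : SignedPerm m) (j : Fin (m + 1)) (ε : Bool) :
    (pins σ' j ε).1 j = Fin.last m := by
  show (finSuccEquiv' (Fin.last m)).symm (Option.map σ'.1 (finSuccEquiv' j j)) = _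
  rw [finSuccEquiv'_at]
  exact finSuccEquiv'_symm_none _

lemma pins_fst_succAbove (σ' : SignedPerm m) (j : Fin (m + 1)) (ε : Bool) (g : Fin m) :
    (pins σ' j ε).1 (j.succAbove g) = Fin.castSucc (σ'.1 g) := by
  show (finSuccEquiv' (Fin.last m)).symm (Option.map σ'.1 (finSuccEquiv' j (j.succAbove g))) = _
  rw [finSuccEquiv'_succAbove]
  exact finSuccEquiv'_symm_some_below (Fin.castSucc_lt_last _)

lemma pins_snd_at (σ' : SignedPerm m) (j : Fin (m + 1)) (ε : Bool) :
    (pins σ' j ε).2 j = ε := by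
  rw [pins_snd_elim, finSuccEquiv'_at]
  rfl

lemma pins_snd_succAbove (σ' : SignedPerm m) (j : Fin (m + 1)) (ε : Bool) (g : Fin m) :
    (pins σ' j ε).2 (j.succAbove g) = σ'.2 g := by
  rw [pins_snd_elim, finSuccEquiv'_succAbove]
  rfl

lemma ins_bijective :
    Function.Bijective (fun x : SignedPerm m × Fin (m + 1) × Bool => ins x.1 x.2.1 x.2.2) := by
  rw [Fintype.bijective_iff_injective_and_card]
  constructor
  · rintro ⟨σ, j, ε⟩ ⟨σ', j', ε'⟩ h
    simp only at h
    rw [ins, ins] at h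
    set τ := if ε then flip1 σ else σ with hτdef
    set τ' := if ε' then flip1 σ' else σ' with hτ'def
    have hfst : (pins τ j ε).1 = (pins τ' j' ε').1 := by rw [h]
    have hsnd : (pins τ j ε).2 = (pins τ' j' ε').2 := by rw [h]
    have hj : j = j' := by
      have h1 : (pins τ' j' ε').1 j = Fin.last m := by rw [← hfst]; exact pins_fst_at τ j ε
      have h2 : (pins τ' j' ε').1 j' = Fin.last m := pins_fst_at τ' j' ε'
      exact (pins τ' j' ε').1.injective (h1.trans h2.symm)
    subst hj
    have hε : ε = ε' := by
      have h1 : (pins τ' j ε').2 j = ε := by rw [← hsnd]; exact pins_snd_at τ j ε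
      rw [pins_snd_at] at h1
      exact h1.symm
    subst hε
    have hττ' : τ = τ' := by
      refine Prod.ext (Equiv.ext fun g => ?_) (funext fun g => ?_)
      · refine Fin.castSucc_injective m ?_
        rw [← pins_fst_succAbove τ j ε g, ← pins_fst_succAbove τ' j ε g, hfst]
      · rw [← pins_snd_succAbove τ j ε g, ← pins_snd_succAbove τ' j ε g, hsnd]
    have hσσ' : σ = σ' := by
      cases ε with
      | false =>
        have h1 : τ = σ := rfl
        have h2 : τ' = σ' := rfl
        rw [← h1, ← h2]; exact hττ'
      | true =>
        have h1 : τ = flip1 σ := rfl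
        have h2 : τ' = flip1 σ' := rfl
        have h3 : flip1 σ = flip1 σ' := by rw [← h1, ← h2]; exact hττ'
        have h4 := congrArg flip1 h3
        rwa [flip1_flip1, flip1_flip1] at h4
    rw [hσσ']
  · simp only [Fintype.card_prod, Fintype.card_perm, Fintype.card_fin, Fintype.card_bool,
      Fintype.card_fun]
    rw [Nat.factorial_succ, pow_succ]
    ring

end DRec
namespace DRec
open Finset
variable {m : ℕ}

lemma filter_two_le_card (σ : SignedPerm m) :
    (σ.ddes.filter (fun i => 2 ≤ i)).card + (σ.ddes.filter (fun i => i < 2)).card = σ.d := by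
  have h := Finset.card_filter_add_card_filter_not (s := σ.ddes) (p := fun i => 2 ≤ i)
  have e : σ.ddes.filter (fun i => ¬ 2 ≤ i) = σ.ddes.filter (fun i => i < 2) := by
    apply filter_congr; intro i _; omega
  rw [e] at h
  exact h

lemma ins_d_ge_true (hm : 2 ≤ m) (σ : SignedPerm m) (j : Fin (m + 1)) (hj : 2 ≤ (j : ℕ)) :
    (ins σ j true).d + (if (j : ℕ) ∈ σ.ddes then 1 else 0) = σ.d + 1 :=
  ins_d_ge hm σ j true hj

lemma ins_d_ge_false (hm : 2 ≤ m) (σ : SignedPerm m) (j : Fin (m + 1)) (hj : 2 ≤ (j : ℕ)) :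
    (ins σ j false).d + (if (j : ℕ) ∈ σ.ddes then 1 else 0)
      = σ.d + (if (j : ℕ) < m then 1 else 0) :=
  ins_d_ge hm σ j false hj

lemma inner_count (hm : 2 ≤ m) (σ : SignedPerm m) (K : ℕ) :
    (univ.filter fun y : Fin (m + 1) × Bool =>
        (ins σ y.1 y.2).typeGe2 ∧ (ins σ y.1 y.2).d = K).card
    = (if σ.typeGe2 ∧ σ.d = K then 2 * K + 1 else 0)
      + (if σ.typeGe2 ∧ σ.d + 1 = K then 2 * m - 2 * K else 0)
      + (if σ.type1 ∧ σ.d = K then 1 else 0)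
      + (if σ.type01 ∧ σ.d = K + 1 then 1 else 0)
      + (if σ.type0Ge2 ∧ σ.d = K then 1 else 0) := by
  rw [Finset.card_filter, Fintype.sum_prod_type]
  simp only [Fintype.sum_bool]
  by_cases hge : σ.typeGe2
  · -- σ of type ≥ 2
    have h0 : 0 ∉ σ.ddes := hge.1
    have h1 : 1 ∉ σ.ddes := hge.2
    have hDsub : σ.ddes ⊆ Finset.Ico 2 m := by
      intro i hi
      have := mem_ddes_lt hi
      have hi0 : i ≠ 0 := by rintro rfl; exact h0 hi
      have hi1 : i ≠ 1 := by rintro rfl; exact h1 hi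
      simp only [Finset.mem_Ico]; omega
    have hdle : σ.d ≤ m - 2 := by
      have := Finset.card_le_card hDsub
      rw [Nat.card_Ico] at this
      have hd' : σ.d = σ.ddes.card := rfl
      omega
    set G : ℕ → ℕ := fun i =>
      if i = 0 then 0 else if i = 1 then (if σ.d + 1 = K then 1 else 0)
      else if i = m then (if σ.d = K then 1 else 0) + (if σ.d + 1 = K then 1 else 0)
      else if i ∈ σ.ddes then 2 * (if σ.d = K then 1 else 0)
      else 2 * (if σ.d + 1 = K then 1 else 0) with hG
    have hterm : ∀ j : Fin (m + 1),
        ((if (ins σ j true).typeGe2 ∧ (ins σ j true).d = K then 1 else 0)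
          + (if (ins σ j false).typeGe2 ∧ (ins σ j false).d = K then 1 else 0))
        = G ((j : ℕ)) := by
      intro j
      rw [hG]
      beta_reduce
      rcases Nat.lt_or_ge (j : ℕ) 2 with hj2 | hj2
      · interval_cases hjv : (j : ℕ)
        · rw [if_neg (fun hP => ins_not_ge2_zero (by omega) σ j true hjv hP.1),
            if_neg (fun hP => ins_not_ge2_zero (by omega) σ j false hjv hP.1)]
          simp
        · rw [if_neg (fun hP => ins_not_ge2_one_true (by omega) σ j hjv hP.1)]
          have hfD : σ.ddes.filter (fun i => 2 ≤ i) = σ.ddes := by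
            apply Finset.filter_true_of_mem
            intro i hi
            have hi0 : i ≠ 0 := by rintro rfl; exact h0 hi
            have hi1 : i ≠ 1 := by rintro rfl; exact h1 hi
            omega
          have hd : (ins σ j false).d = σ.d + 1 := by
            have hdd : σ.d = σ.ddes.card := rfl
            rw [ins_d_one hm σ j hjv, hfD]; omega
          have hc : ((ins σ j false).typeGe2 ∧ (ins σ j false).d = K) ↔ (σ.d + 1 = K) := by
            rw [hd]
            simp [ins_ge2_one hm σ j hjv]
          rw [if_congr hc rfl rfl]
          simp
      · -- 2 ≤ j
        have hge2t : (ins σ j true).typeGe2 := (ins_ge2_ge hm σ j true hj2).2 hge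
        have hge2f : (ins σ j false).typeGe2 := (ins_ge2_ge hm σ j false hj2).2 hge
        have hdt := ins_d_ge_true hm σ j hj2
        have hdf := ins_d_ge_false hm σ j hj2
        by_cases hjD : (j : ℕ) ∈ σ.ddes
        · have hjm : (j : ℕ) < m := mem_ddes_lt hjD
          rw [if_pos hjD] at hdt hdf
          rw [if_pos hjm] at hdf
          have hdt' : (ins σ j true).d = σ.d := by omega
          have hdf' : (ins σ j false).d = σ.d := by omega
          have ct : ((ins σ j true).typeGe2 ∧ (ins σ j true).d = K) ↔ (σ.d = K) := by
            rw [hdt']; simp [hge2t]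
          have cf : ((ins σ j false).typeGe2 ∧ (ins σ j false).d = K) ↔ (σ.d = K) := by
            rw [hdf']; simp [hge2f]
          rw [if_congr ct rfl rfl, if_congr cf rfl rfl,
            if_neg (by omega : ¬ (j : ℕ) = 0), if_neg (by omega : ¬ (j : ℕ) = 1),
            if_neg (by omega : ¬ (j : ℕ) = m), if_pos hjD]
          by_cases hK : σ.d = K <;> simp [hK]
        · rw [if_neg hjD] at hdt hdf
          have hjm' : (j : ℕ) ≤ m := by omega
          rcases Nat.eq_or_lt_of_le hjm' with hjm | hjm
          · -- j = m
            have hdt' : (ins σ j true).d = σ.d + 1 := by omega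
            have hdf' : (ins σ j false).d = σ.d := by
              rw [if_neg (by omega : ¬ (j : ℕ) < m)] at hdf
              omega
            have ct : ((ins σ j true).typeGe2 ∧ (ins σ j true).d = K) ↔ (σ.d + 1 = K) := by
              rw [hdt']; simp [hge2t]
            have cf : ((ins σ j false).typeGe2 ∧ (ins σ j false).d = K) ↔ (σ.d = K) := by
              rw [hdf']; simp [hge2f]
            rw [if_congr ct rfl rfl, if_congr cf rfl rfl,
              if_neg (by omega : ¬ (j : ℕ) = 0), if_neg (by omega : ¬ (j : ℕ) = 1),
              if_pos hjm]
            omega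
          · -- 2 ≤ j < m
            have hdt' : (ins σ j true).d = σ.d + 1 := by omega
            have hdf' : (ins σ j false).d = σ.d + 1 := by
              rw [if_pos hjm] at hdf
              omega
            have ct : ((ins σ j true).typeGe2 ∧ (ins σ j true).d = K) ↔ (σ.d + 1 = K) := by
              rw [hdt']; simp [hge2t]
            have cf : ((ins σ j false).typeGe2 ∧ (ins σ j false).d = K) ↔ (σ.d + 1 = K) := by
              rw [hdf']; simp [hge2f]
            rw [if_congr ct rfl rfl, if_congr cf rfl rfl,
              if_neg (by omega : ¬ (j : ℕ) = 0), if_neg (by omega : ¬ (j : ℕ) = 1),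
              if_neg (by omega : ¬ (j : ℕ) = m), if_neg hjD]
            by_cases hK : σ.d + 1 = K <;> simp [hK]
    rw [Finset.sum_congr rfl (fun j _ => hterm j), Fin.sum_univ_eq_sum_range G (m + 1)]
    rw [Finset.range_eq_Ico, Finset.sum_eq_sum_Ico_succ_bot (by omega),
      Finset.sum_eq_sum_Ico_succ_bot (by omega)]
    have hG0 : G 0 = 0 := by simp [hG]
    have hG1 : G 1 = (if σ.d + 1 = K then 1 else 0) := by
      rw [hG]
      beta_reduce
      rw [if_neg (by omega : ¬ (1 : ℕ) = 0), if_pos rfl]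
    have hGm : G m = (if σ.d = K then 1 else 0) + (if σ.d + 1 = K then 1 else 0) := by
      rw [hG]
      beta_reduce
      rw [if_neg (by omega : ¬ m = 0), if_neg (by omega : ¬ m = 1), if_pos rfl]
    rw [hG0, hG1]
    have hIco : Finset.Ico 2 (m + 1) = insert m (Finset.Ico 2 m) := by
      rw [Nat.Ico_succ_right_eq_insert_Ico (by omega)]
    rw [hIco, Finset.sum_insert (by simp), hGm]
    have hcongr : ∀ i ∈ Finset.Ico 2 m,
        G i = (if i ∈ σ.ddes then 2 * (if σ.d = K then 1 else 0)
            else 2 * (if σ.d + 1 = K then 1 else 0)) := by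
      intro i hi
      rw [Finset.mem_Ico] at hi
      rw [hG]
      beta_reduce
      rw [if_neg (by omega), if_neg (by omega), if_neg (by omega)]
    rw [Finset.sum_congr rfl hcongr, Finset.sum_ite, Finset.sum_const, Finset.sum_const]
    have hf1 : (Finset.Ico 2 m).filter (· ∈ σ.ddes) = σ.ddes := by
      rw [Finset.filter_mem_eq_inter]
      exact Finset.inter_eq_right.2 hDsub
    have hf2 : ((Finset.Ico 2 m).filter (fun i => ¬ i ∈ σ.ddes)).card = (m - 2) - σ.d := by
      rw [Finset.filter_not, Finset.card_sdiff_of_subset (Finset.filter_subset _ _), hf1, Nat.card_Ico]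
      rfl
    rw [hf1, hf2]
    have ht1 : ¬ (σ.type1 ∧ σ.d = K) := fun h => h1 h.1.1
    have ht2 : ¬ (σ.type01 ∧ σ.d = K + 1) := fun h => h0 h.1.1
    have ht3 : ¬ (σ.type0Ge2 ∧ σ.d = K) := fun h => h0 h.1.1
    rw [if_neg ht1, if_neg ht2, if_neg ht3]
    simp only [smul_eq_mul]
    have hdd : σ.ddes.card = σ.d := rfl
    rw [hdd]
    simp only [hge, true_and]
    split_ifs <;> omega
  · -- σ not of type ≥ 2
    have hcnt := filter_two_le_card σ
    set c : ℕ := (σ.ddes.filter (fun i => 2 ≤ i)).card with hc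
    set G : ℕ → ℕ := fun i => if i = 1 then (if 1 + c = K then 1 else 0) else 0 with hG
    have hterm : ∀ j : Fin (m + 1),
        ((if (ins σ j true).typeGe2 ∧ (ins σ j true).d = K then 1 else 0)
          + (if (ins σ j false).typeGe2 ∧ (ins σ j false).d = K then 1 else 0))
        = G ((j : ℕ)) := by
      intro j
      rw [hG]
      beta_reduce
      rcases Nat.lt_or_ge (j : ℕ) 2 with hj2 | hj2
      · interval_cases hjv : (j : ℕ)
        · rw [if_neg (fun hP => ins_not_ge2_zero (by omega) σ j true hjv hP.1),
            if_neg (fun hP => ins_not_ge2_zero (by omega) σ j false hjv hP.1)]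
          simp
        · rw [if_neg (fun hP => ins_not_ge2_one_true (by omega) σ j hjv hP.1)]
          have hd : (ins σ j false).d = 1 + c := ins_d_one hm σ j hjv
          have cf : ((ins σ j false).typeGe2 ∧ (ins σ j false).d = K) ↔ (1 + c = K) := by
            rw [hd]; simp [ins_ge2_one hm σ j hjv]
          rw [if_congr cf rfl rfl]
          simp
      · rw [if_neg (fun hP => hge ((ins_ge2_ge hm σ j true hj2).1 hP.1)),
          if_neg (fun hP => hge ((ins_ge2_ge hm σ j false hj2).1 hP.1)),
          if_neg (by omega : ¬ (j : ℕ) = 1)]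
    rw [Finset.sum_congr rfl (fun j _ => hterm j), Fin.sum_univ_eq_sum_range G (m + 1)]
    have hGev : ∀ i ∈ Finset.range (m + 1), G i = if i = 1 then (if 1 + c = K then 1 else 0) else 0 :=
      fun i _ => by rw [hG]
    rw [Finset.sum_congr rfl hGev,
      Finset.sum_ite_eq' (Finset.range (m + 1)) 1 (fun _ => if 1 + c = K then 1 else 0),
      if_pos (by simp; omega)]
    -- now identify σ's type
    have hor : 0 ∈ σ.ddes ∨ 1 ∈ σ.ddes := by
      by_contra hcon
      push_neg at hcon
      exact hge ⟨hcon.1, hcon.2⟩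
    by_cases h0 : 0 ∈ σ.ddes <;> by_cases h1 : 1 ∈ σ.ddes
    · -- type 0,1
      have hfl : σ.ddes.filter (fun i => i < 2) = {0, 1} := by
        ext i
        simp only [Finset.mem_filter, Finset.mem_insert, Finset.mem_singleton]
        constructor
        · rintro ⟨hi, hi2⟩; omega
        · rintro (rfl | rfl) <;> exact ⟨by assumption, by omega⟩
      have hcard : c + 2 = σ.d := by
        rw [hfl] at hcnt
        simpa using hcnt
      simp only [SignedPerm.type1, SignedPerm.type01, SignedPerm.type0Ge2, SignedPerm.typeGe2,
        h0, h1, hge, not_true, and_false, false_and, if_false, true_and, and_true]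
      split_ifs <;> omega
    · -- type 0,≥2
      have hfl : σ.ddes.filter (fun i => i < 2) = {0} := by
        ext i
        simp only [Finset.mem_filter, Finset.mem_singleton]
        constructor
        · rintro ⟨hi, hi2⟩
          
          rcases (by omega : i = 0 ∨ i = 1) with rfl | rfl
          · rfl
          · exact absurd hi h1
        · rintro rfl; exact ⟨h0, by omega⟩
      have hcard : c + 1 = σ.d := by
        rw [hfl] at hcnt
        simpa using hcnt
      simp only [SignedPerm.type1, SignedPerm.type01, SignedPerm.type0Ge2, SignedPerm.typeGe2,
        h0, h1, hge, not_true, and_false, false_and, if_false, true_and, and_true,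
        not_false_iff]
      split_ifs <;> omega
    · -- type 1
      have hfl : σ.ddes.filter (fun i => i < 2) = {1} := by
        ext i
        simp only [Finset.mem_filter, Finset.mem_singleton]
        constructor
        · rintro ⟨hi, hi2⟩
          rcases (by omega : i = 0 ∨ i = 1) with rfl | rfl
          · exact absurd hi h0
          · rfl
        · rintro rfl; exact ⟨h1, by omega⟩
      have hcard : c + 1 = σ.d := by
        rw [hfl] at hcnt
        simpa using hcnt
      simp only [SignedPerm.type1, SignedPerm.type01, SignedPerm.type0Ge2, SignedPerm.typeGe2,
        h0, h1, hge, not_true, and_false, false_and, if_false, true_and, and_true,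
        not_false_iff]
      split_ifs <;> omega
    · exact absurd hor (by push_neg; exact ⟨h0, h1⟩)

end DRec
namespace DRec
open Finset
variable {m : ℕ}

lemma typeGe2_d_le (hm : 2 ≤ m) (σ : SignedPerm m) (h : σ.typeGe2) : σ.d + 2 ≤ m := by
  have hDsub : σ.ddes ⊆ Finset.Ico 2 m := by
    intro i hi
    have := mem_ddes_lt hi
    have hi0 : i ≠ 0 := by rintro rfl; exact h.1 hi
    have hi1 : i ≠ 1 := by rintro rfl; exact h.2 hi
    simp only [Finset.mem_Ico]; omega
  have := Finset.card_le_card hDsub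
  rw [Nat.card_Ico] at this
  have hd' : σ.d = σ.ddes.card := rfl
  omega

lemma main_step (hm : 2 ≤ m) (K : ℕ) :
    subEulerGe2 (m + 1) (K : ℤ)
      = (2 * K + 1) * subEulerGe2 m (K : ℤ)
        + (2 * m - 2 * K) * subEulerGe2 m ((K : ℤ) - 1)
        + subEuler1 m (K : ℤ) + subEuler01 m ((K : ℤ) + 1) + subEuler0Ge2 m (K : ℤ) := by
  classical
  have e1 : (univ.filter fun x : SignedPerm m × Fin (m + 1) × Bool =>
        (ins x.1 x.2.1 x.2.2).inD ∧ (ins x.1 x.2.1 x.2.2).typeGe2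
          ∧ ((ins x.1 x.2.1 x.2.2).d : ℤ) = (K : ℤ)).card
      = (univ.filter fun p : SignedPerm (m + 1) =>
          p.inD ∧ p.typeGe2 ∧ ((p.d : ℤ) = (K : ℤ))).card := by
    apply Finset.card_bij (fun (a : SignedPerm m × Fin (m + 1) × Bool) _ => ins a.1 a.2.1 a.2.2)
    · intro a ha
      rw [Finset.mem_filter] at ha ⊢
      exact ⟨Finset.mem_univ _, ha.2⟩
    · intro a _ b _ h
      exact ins_bijective.1 h
    · intro b hb
      obtain ⟨a, ha⟩ := ins_bijective.2 b
      refine ⟨a, ?_, ha⟩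
      rw [Finset.mem_filter] at hb ⊢
      refine ⟨Finset.mem_univ _, ?_⟩
      rw [show ins a.1 a.2.1 a.2.2 = b from ha]
      exact hb.2
  rw [subEulerGe2, ← e1, Finset.card_filter, ← Finset.univ_product_univ, Finset.sum_product]
  have inner : ∀ σ : SignedPerm m,
      (∑ y : Fin (m + 1) × Bool, if (ins σ y.1 y.2).inD ∧ (ins σ y.1 y.2).typeGe2
          ∧ ((ins σ y.1 y.2).d : ℤ) = (K : ℤ) then 1 else 0)
      = (if σ.inD ∧ (σ.typeGe2 ∧ σ.d = K) then 2 * K + 1 else 0)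
        + (if σ.inD ∧ (σ.typeGe2 ∧ σ.d + 1 = K) then 2 * m - 2 * K else 0)
        + (if σ.inD ∧ (σ.type1 ∧ σ.d = K) then 1 else 0)
        + (if σ.inD ∧ (σ.type01 ∧ σ.d = K + 1) then 1 else 0)
        + (if σ.inD ∧ (σ.type0Ge2 ∧ σ.d = K) then 1 else 0) := by
    intro σ
    have hcond : ∀ y : Fin (m + 1) × Bool,
        ((ins σ y.1 y.2).inD ∧ (ins σ y.1 y.2).typeGe2
          ∧ ((ins σ y.1 y.2).d : ℤ) = (K : ℤ))
        ↔ (σ.inD ∧ ((ins σ y.1 y.2).typeGe2 ∧ (ins σ y.1 y.2).d = K)) := by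
      intro y
      rw [inD_ins (by omega) σ y.1 y.2]
      constructor
      · rintro ⟨h1, h2, h3⟩; exact ⟨h1, h2, by omega⟩
      · rintro ⟨h1, h2, h3⟩; exact ⟨h1, h2, by omega⟩
    rw [Finset.sum_congr rfl (fun y _ => if_congr (hcond y) rfl rfl)]
    by_cases hσ : σ.inD
    · simp only [hσ, true_and]
      rw [← Finset.card_filter, inner_count hm σ K]
    · simp [hσ]
  rw [Finset.sum_congr rfl (fun σ _ => inner σ)]
  rw [Finset.sum_add_distrib, Finset.sum_add_distrib, Finset.sum_add_distrib,
    Finset.sum_add_distrib]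
  have hsum : ∀ (P : SignedPerm m → Prop) (_ : DecidablePred P) (c : ℕ),
      (∑ σ : SignedPerm m, if P σ then c else 0) = c * (univ.filter P).card := by
    intro P hP c
    rw [← Finset.sum_filter, Finset.sum_const, smul_eq_mul, mul_comm]
  rw [hsum _ _ (2 * K + 1), hsum _ _ (2 * m - 2 * K), hsum _ _ 1, hsum _ _ 1, hsum _ _ 1,
    one_mul, one_mul, one_mul]
  have cA : (univ.filter fun σ : SignedPerm m => σ.inD ∧ (σ.typeGe2 ∧ σ.d = K)).card
      = subEulerGe2 m (K : ℤ) := by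
    rw [subEulerGe2]
    apply congrArg
    apply Finset.filter_congr
    intro σ _
    constructor
    · rintro ⟨h1, h2, h3⟩; exact ⟨h1, h2, by omega⟩
    · rintro ⟨h1, h2, h3⟩; exact ⟨h1, h2, by omega⟩
  have cB : (univ.filter fun σ : SignedPerm m => σ.inD ∧ (σ.typeGe2 ∧ σ.d + 1 = K)).card
      = subEulerGe2 m ((K : ℤ) - 1) := by
    rw [subEulerGe2]
    apply congrArg
    apply Finset.filter_congr
    intro σ _
    constructor
    · rintro ⟨h1, h2, h3⟩; exact ⟨h1, h2, by omega⟩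
    · rintro ⟨h1, h2, h3⟩; exact ⟨h1, h2, by omega⟩
  have cC : (univ.filter fun σ : SignedPerm m => σ.inD ∧ (σ.type1 ∧ σ.d = K)).card
      = subEuler1 m (K : ℤ) := by
    rw [subEuler1]
    apply congrArg
    apply Finset.filter_congr
    intro σ _
    constructor
    · rintro ⟨h1, h2, h3⟩; exact ⟨h1, h2, by omega⟩
    · rintro ⟨h1, h2, h3⟩; exact ⟨h1, h2, by omega⟩
  have cD : (univ.filter fun σ : SignedPerm m => σ.inD ∧ (σ.type01 ∧ σ.d = K + 1)).card
      = subEuler01 m ((K : ℤ) + 1) := by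
    rw [subEuler01]
    apply congrArg
    apply Finset.filter_congr
    intro σ _
    constructor
    · rintro ⟨h1, h2, h3⟩; exact ⟨h1, h2, by omega⟩
    · rintro ⟨h1, h2, h3⟩; exact ⟨h1, h2, by omega⟩
  have cE : (univ.filter fun σ : SignedPerm m => σ.inD ∧ (σ.type0Ge2 ∧ σ.d = K)).card
      = subEuler0Ge2 m (K : ℤ) := by
    rw [subEuler0Ge2]
    apply congrArg
    apply Finset.filter_congr
    intro σ _
    constructor
    · rintro ⟨h1, h2, h3⟩; exact ⟨h1, h2, by omega⟩
    · rintro ⟨h1, h2, h3⟩; exact ⟨h1, h2, by omega⟩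
  rw [cA, cB, cC, cD, cE]

end DRec
/-- **Proposition 3.2 (iii).** Recurrence for the sub-Eulerian numbers `D_{n,k}^{≥2}`. -/
theorem subEulerGe2_recurrence (n : ℕ) (hn : 3 ≤ n) (k : ℤ) (hk : 0 ≤ k) :
    (subEulerGe2 n k : ℤ) =
      (2 * k + 1) * subEulerGe2 (n - 1) k
        + 2 * ((n : ℤ) - k - 1) * subEulerGe2 (n - 1) (k - 1)
        + subEuler1 (n - 1) k + subEuler01 (n - 1) (k + 1) + subEuler0Ge2 (n - 1) k := by
  classical
  obtain ⟨m, rfl⟩ : ∃ m, n = m + 1 := ⟨n - 1, by omega⟩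
  have hm : 2 ≤ m := by omega
  obtain ⟨K, rfl⟩ : ∃ K : ℕ, k = (K : ℤ) := ⟨k.toNat, by omega⟩
  rw [Nat.add_sub_cancel, DRec.main_step hm K]
  by_cases hB : subEulerGe2 m ((K : ℤ) - 1) = 0
  · rw [hB]
    push_cast
    ring
  · have hKle : K + 1 ≤ m := by
      have hpos : 0 < (Finset.univ.filter fun σ : SignedPerm m =>
          σ.inD ∧ σ.typeGe2 ∧ ((σ.d : ℤ)) = (K : ℤ) - 1).card := by
        rw [subEulerGe2] at hB
        omega
      obtain ⟨σ, hσ⟩ := Finset.card_pos.1 hpos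
      rw [Finset.mem_filter] at hσ
      have h2 := DRec.typeGe2_d_le hm σ hσ.2.2.1
      have h3 := hσ.2.2.2
      omega
    have hcast : ((2 * m - 2 * K : ℕ) : ℤ) = 2 * ((m : ℤ) + 1 - (K : ℤ) - 1) := by omega
    push_cast [hcast]
    try ring
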